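/- Let H be a Hilbert space, T a bounded operator on H, and suppose Δ = T*T − I satisfies Δ = ∑_{i=1}^∞ c_i (k_i ⊗ k_i) (convergence in the strong operator topology) where c_i > 0, the k_i are vectors in H, and T* k_i = conj(λ_i) k_i with λ_i in the closed unit disc. Then for every n ≥ 2, ∑_{j=0}^{n} (-1)^j C(n,j) T*^j T^j = −∑_{i=1}^∞ c_i (1−|λ_i|²)^{n-1} (k_i ⊗ k_i), and in particular this operator is negative semidefinite. -/

import Mathlib

open ContinuousLinearMap Filter Finset

/-- The rank-one operator `x ↦ ⟨x, k⟩ k` (inner ℂ product linear in the first slot,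
i.e. `x ↦ ⟪k, x⟫_ℂ • k` in Mathlib's convention). -/
noncomputable def rankOne {H : Type*} [NormedAddCommGroup H] [InnerProductSpace ℂ H]
    (k : H) : H →L[ℂ] H :=
  (ContinuousLinearMap.toSpanSingleton ℂ k).comp (innerSL ℂ k)

lemma pascal_sum {M : Type*} [AddCommGroup M] [Module ℂ M] (m : ℕ) (v : ℕ → M) :
    ∑ j ∈ Finset.range (m+2), ((-1:ℂ)^j * ((m+1).choose j : ℂ)) • v j
      = ∑ j ∈ Finset.range (m+1), ((-1:ℂ)^j * (m.choose j : ℂ)) • v j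
        - ∑ j ∈ Finset.range (m+1), ((-1:ℂ)^j * (m.choose j : ℂ)) • v (j+1) := by
  rw [Finset.sum_range_succ' _ (m+1)]
  have h1 : ∀ j ∈ Finset.range (m+1),
      ((-1:ℂ)^(j+1) * (((m+1).choose (j+1)) : ℂ)) • v (j+1)
        = ((-1:ℂ)^(j+1) * ((m.choose (j+1)) : ℂ)) • v (j+1)
          + (-(((-1:ℂ)^j * (m.choose j : ℂ)) • v (j+1))) := by
    intro j _
    rw [Nat.choose_succ_succ]
    push_cast
    rw [pow_succ]
    module
  rw [Finset.sum_congr rfl h1, Finset.sum_add_distrib]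
  have h2 : ∑ j ∈ Finset.range (m+1), ((-1:ℂ)^(j+1) * ((m.choose (j+1)) : ℂ)) • v (j+1)
      = ∑ j ∈ Finset.range m, ((-1:ℂ)^(j+1) * ((m.choose (j+1)) : ℂ)) • v (j+1) := by
    rw [Finset.sum_range_succ, Nat.choose_succ_self]
    simp
  have h3 : ∑ j ∈ Finset.range (m+1), ((-1:ℂ)^j * (m.choose j : ℂ)) • v j
      = ∑ j ∈ Finset.range m, ((-1:ℂ)^(j+1) * ((m.choose (j+1)) : ℂ)) • v (j+1)
        + ((-1:ℂ)^0 * ((m+1).choose 0 : ℂ)) • v 0 := by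
    rw [Finset.sum_range_succ' _ m]
    simp
  rw [h2, Finset.sum_neg_distrib, h3]
  abel

theorem stmt4 {H : Type*} [NormedAddCommGroup H] [InnerProductSpace ℂ H] [CompleteSpace H]
    (T : H →L[ℂ] H) (c : ℕ → ℝ) (hc : ∀ i, 0 < c i)
    (ks : ℕ → H) (lam : ℕ → ℂ) (hlam : ∀ i, ‖lam i‖ ≤ 1)
    (heig : ∀ i, adjoint T (ks i) = (starRingEnd ℂ) (lam i) • ks i)
    (hΔ : ∀ x : H,
      Tendsto (fun N => ∑ i ∈ Finset.range N, (c i : ℂ) • rankOne (ks i) x) atTop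
        (nhds ((adjoint T * T - 1) x))) :
    ∀ n : ℕ, 2 ≤ n →
      (∀ x : H,
        Tendsto
          (fun N => ∑ i ∈ Finset.range N,
            ((c i : ℂ) * ((1 : ℂ) - (‖lam i‖ : ℂ) ^ 2) ^ (n - 1)) • rankOne (ks i) x)
          atTop
          (nhds (-((∑ j ∈ Finset.range (n + 1),
            ((-1 : ℂ) ^ j * (Nat.choose n j : ℂ)) • ((adjoint T) ^ j * T ^ j)) x)))) ∧
      (∀ x : H,
        (inner ℂ x ((∑ j ∈ Finset.range (n + 1),
          ((-1 : ℂ) ^ j * (Nat.choose n j : ℂ)) • ((adjoint T) ^ j * T ^ j)) x) : ℂ).re ≤ 0) := by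
  have hrank : ∀ (k x : H), rankOne k x = (inner ℂ k x : ℂ) • k := fun k x => rfl
  -- key eigen-computation
  have key : ∀ (i : ℕ) (x : H), adjoint T (rankOne (ks i) (T x)) =
      ((‖lam i‖ : ℂ)^2) • rankOne (ks i) x := by
    intro i x
    have h1 : (inner ℂ (ks i) (T x) : ℂ) = lam i * (inner ℂ (ks i) x : ℂ) := by
      rw [← adjoint_inner_left, heig i, inner_smul_left, Complex.conj_conj]
    rw [hrank, map_smul, heig i, h1, hrank, smul_smul, smul_smul]
    rw [← Complex.mul_conj' (lam i)]
    ring_nf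
  -- the main convergence statement, for all n ≥ 1
  have main : ∀ n : ℕ, 1 ≤ n → ∀ x : H,
      Tendsto
        (fun N => ∑ i ∈ Finset.range N,
          ((c i : ℂ) * ((1 : ℂ) - (‖lam i‖ : ℂ) ^ 2) ^ (n - 1)) • rankOne (ks i) x)
        atTop
        (nhds (-((∑ j ∈ Finset.range (n + 1),
          ((-1 : ℂ) ^ j * (Nat.choose n j : ℂ)) • ((adjoint T) ^ j * T ^ j)) x))) := by
    intro n hn
    induction n, hn using Nat.le_induction with
    | base =>
      intro x
      have hD : -((∑ j ∈ Finset.range 2,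
          ((-1 : ℂ) ^ j * ((1:ℕ).choose j : ℂ)) • ((adjoint T) ^ j * T ^ j)) x)
          = (adjoint T * T - 1) x := by
        simp [Finset.sum_range_succ, ContinuousLinearMap.sum_apply,
          ContinuousLinearMap.smul_apply, ContinuousLinearMap.sub_apply,
          ContinuousLinearMap.mul_apply, pow_succ]
        abel
      rw [hD]
      have := hΔ x
      simpa using this
    | succ n hn1 IH =>
      intro x
      -- the transformed sequence
      have hT : Tendsto
          (fun N => adjoint T (∑ i ∈ Finset.range N,
            ((c i : ℂ) * ((1 : ℂ) - (‖lam i‖ : ℂ) ^ 2) ^ (n - 1)) • rankOne (ks i) (T x)))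
          atTop
          (nhds (adjoint T (-((∑ j ∈ Finset.range (n + 1),
            ((-1 : ℂ) ^ j * (Nat.choose n j : ℂ)) • ((adjoint T) ^ j * T ^ j)) (T x))))) :=
        ((adjoint T).continuous.tendsto _).comp (IH (T x))
      have hT' : Tendsto
          (fun N => ∑ i ∈ Finset.range N,
            (((c i : ℂ) * ((1 : ℂ) - (‖lam i‖ : ℂ) ^ 2) ^ (n - 1)) * (‖lam i‖ : ℂ)^2)
              • rankOne (ks i) x)
          atTop
          (nhds (adjoint T (-((∑ j ∈ Finset.range (n + 1),
            ((-1 : ℂ) ^ j * (Nat.choose n j : ℂ)) • ((adjoint T) ^ j * T ^ j)) (T x))))) := by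
        refine hT.congr (fun N => ?_)
        rw [map_sum]
        refine Finset.sum_congr rfl (fun i _ => ?_)
        rw [map_smul, key i x, smul_smul]
      have hsub := (IH x).sub hT'
      have heq : (fun N => (∑ i ∈ Finset.range N,
            ((c i : ℂ) * ((1 : ℂ) - (‖lam i‖ : ℂ) ^ 2) ^ (n - 1)) • rankOne (ks i) x)
          - ∑ i ∈ Finset.range N,
            (((c i : ℂ) * ((1 : ℂ) - (‖lam i‖ : ℂ) ^ 2) ^ (n - 1)) * (‖lam i‖ : ℂ)^2)
              • rankOne (ks i) x)
          = fun N => ∑ i ∈ Finset.range N,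
            ((c i : ℂ) * ((1 : ℂ) - (‖lam i‖ : ℂ) ^ 2) ^ (n + 1 - 1)) • rankOne (ks i) x := by
        funext N
        rw [← Finset.sum_sub_distrib]
        refine Finset.sum_congr rfl (fun i _ => ?_)
        rw [← sub_smul]
        congr 1
        have hpow : ((1 : ℂ) - (‖lam i‖ : ℂ) ^ 2) ^ (n - 1) * ((1 : ℂ) - (‖lam i‖ : ℂ) ^ 2)
            = ((1 : ℂ) - (‖lam i‖ : ℂ) ^ 2) ^ (n + 1 - 1) := by
          rw [← pow_succ]
          congr 1
          omega
        rw [← hpow]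
        ring
      rw [heq] at hsub
      -- identify the limit
      have hlim : -((∑ j ∈ Finset.range (n + 1),
            ((-1 : ℂ) ^ j * (Nat.choose n j : ℂ)) • ((adjoint T) ^ j * T ^ j)) x)
          - adjoint T (-((∑ j ∈ Finset.range (n + 1),
            ((-1 : ℂ) ^ j * (Nat.choose n j : ℂ)) • ((adjoint T) ^ j * T ^ j)) (T x)))
          = -((∑ j ∈ Finset.range (n + 1 + 1),
            ((-1 : ℂ) ^ j * (Nat.choose (n+1) j : ℂ)) • ((adjoint T) ^ j * T ^ j)) x) := by
        have hps := pascal_sum n (fun j => ((adjoint T)^j) ((T^j) x))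
        have hexp : ∀ (m : ℕ) (y : H), (∑ j ∈ Finset.range (m + 1),
            ((-1 : ℂ) ^ j * (Nat.choose m j : ℂ)) • ((adjoint T) ^ j * T ^ j)) y
            = ∑ j ∈ Finset.range (m + 1),
              ((-1 : ℂ) ^ j * (Nat.choose m j : ℂ)) • ((adjoint T)^j) ((T^j) y) := by
          intro m y
          simp [ContinuousLinearMap.sum_apply, ContinuousLinearMap.smul_apply,
            ContinuousLinearMap.mul_apply]
        have hadj : adjoint T ((∑ j ∈ Finset.range (n + 1),
            ((-1 : ℂ) ^ j * (Nat.choose n j : ℂ)) • ((adjoint T) ^ j * T ^ j)) (T x))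
            = ∑ j ∈ Finset.range (n + 1),
              ((-1 : ℂ) ^ j * (Nat.choose n j : ℂ)) • ((adjoint T)^(j+1)) ((T^(j+1)) x) := by
          rw [hexp n (T x), map_sum]
          refine Finset.sum_congr rfl (fun j _ => ?_)
          rw [map_smul]
          congr 1
          rw [pow_succ' (adjoint T) j, pow_succ T j]
          simp [ContinuousLinearMap.mul_apply]
        rw [map_neg, hadj, hexp n x, hexp (n+1) x]
        rw [show n + 1 + 1 = n + 2 from rfl, hps]
        abel
      rw [← hlim]
      exact hsub
  intro n hn
  have hn1 : 1 ≤ n := by omega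
  refine ⟨main n hn1, ?_⟩
  -- negativity
  intro x
  have htend := main n hn1 x
  have hre : Tendsto
      (fun N => ((inner ℂ x (∑ i ∈ Finset.range N,
        ((c i : ℂ) * ((1 : ℂ) - (‖lam i‖ : ℂ) ^ 2) ^ (n - 1)) • rankOne (ks i) x) : ℂ)).re)
      atTop
      (nhds ((inner ℂ x (-((∑ j ∈ Finset.range (n + 1),
        ((-1 : ℂ) ^ j * (Nat.choose n j : ℂ)) • ((adjoint T) ^ j * T ^ j)) x)) : ℂ).re)) := by
    exact (Complex.continuous_re.tendsto _).comp
      (((innerSL ℂ x).continuous.tendsto _).comp htend)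
  have hnonneg : ∀ N, 0 ≤ ((inner ℂ x (∑ i ∈ Finset.range N,
      ((c i : ℂ) * ((1 : ℂ) - (‖lam i‖ : ℂ) ^ 2) ^ (n - 1)) • rankOne (ks i) x) : ℂ)).re := by
    intro N
    rw [inner_sum]
    rw [Complex.re_sum]
    refine Finset.sum_nonneg (fun i _ => ?_)
    rw [inner_smul_right, hrank, inner_smul_right]
    have h1 : ((1 : ℂ) - (‖lam i‖ : ℂ) ^ 2) = ((1 - ‖lam i‖^2 : ℝ) : ℂ) := by push_cast; ring
    have h2 : (inner ℂ (ks i) x : ℂ) * (inner ℂ x (ks i) : ℂ)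
        = ((‖(inner ℂ (ks i) x : ℂ)‖^2 : ℝ) : ℂ) := by
      rw [← inner_conj_symm x (ks i), Complex.mul_conj']
      norm_cast
    rw [h1, mul_assoc, h2, ← Complex.ofReal_pow, ← Complex.ofReal_mul, ← Complex.ofReal_mul,
      Complex.ofReal_re]
    have hl : 0 ≤ 1 - ‖lam i‖^2 := by nlinarith [hlam i, norm_nonneg (lam i)]
    have h3 : (0:ℝ) ≤ ‖(inner ℂ (ks i) x : ℂ)‖^2 := by positivity
    nlinarith [mul_nonneg (pow_nonneg hl (n-1)) h3, (hc i).le,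
      mul_nonneg (le_of_lt (hc i)) (mul_nonneg (pow_nonneg hl (n-1)) h3)]
  have hge := ge_of_tendsto' hre hnonneg
  have : ((inner ℂ x (-((∑ j ∈ Finset.range (n + 1),
      ((-1 : ℂ) ^ j * (Nat.choose n j : ℂ)) • ((adjoint T) ^ j * T ^ j)) x)) : ℂ).re)
      = -((inner ℂ x ((∑ j ∈ Finset.range (n + 1),
      ((-1 : ℂ) ^ j * (Nat.choose n j : ℂ)) • ((adjoint T) ^ j * T ^ j)) x) : ℂ)).re := by
    rw [inner_neg_right, Complex.neg_re]
  rw [this] at hge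
  linarith
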